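/- For every real n > 0 and every y ≥ 0 one has φ̃_n(y) ≤ (1+y)·log(1+y). -/
import Mathlib


/-- `C_n = e(1+n)² − 1`. -/
noncomputable def Cn (n : ℝ) : ℝ := Real.exp 1 * (1 + n) ^ 2 - 1

/-- The cut-off function `φ̃_n` of the Mellet–Vasseur argument (Lemma 4.2 of the paper). -/
noncomputable def phiTilde (n y : ℝ) : ℝ :=
  if y ≤ n then (1 + y) * Real.log (1 + y)
  else if y ≤ Cn n then
    2 * (1 + Real.log (1 + n)) * y - (1 + y) * Real.log (1 + y)
      + 2 * (Real.log (1 + n) - n)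
  else Real.exp 1 * (1 + n) ^ 2 - 2 * n - 2

/-- The derivative `φ̃_n'` of the cut-off function `φ̃_n`. -/
noncomputable def Dn (n y : ℝ) : ℝ :=
  if y ≤ n then 1 + Real.log (1 + y)
  else if y ≤ Cn n then 2 * (1 + Real.log (1 + n)) - 1 - Real.log (1 + y)
  else 0

/-- The second derivative `φ̃_n''` of the cut-off function `φ̃_n`
(away from the junction points `y = n`, `y = C_n`). -/
noncomputable def phi2 (n y : ℝ) : ℝ :=
  if y < n then 1 / (1 + y)
  else if y < Cn n then -(1 / (1 + y))
  else 0

/-- For every `n > 0` and `y ≥ 0`, `φ̃_n(y) ≤ (1+y)log(1+y)`. -/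
theorem phiTilde_le_entropy
    (n : ℝ) (hn : 0 < n) (y : ℝ) (hy : 0 ≤ y) :
    phiTilde n y ≤ (1 + y) * Real.log (1 + y) := by
  have hy1 : (0:ℝ) < 1 + y := by linarith
  have hn1 : (0:ℝ) < 1 + n := by linarith
  unfold phiTilde
  split_ifs with h1 h2
  · exact le_refl _
  · -- middle regime: tangent line inequality
    have hx : (0:ℝ) < (1 + n) / (1 + y) := by positivity
    have hlog := Real.log_le_sub_one_of_pos hx
    rw [Real.log_div (ne_of_gt hn1) (ne_of_gt hy1)] at hlog
    -- log(1+n) - log(1+y) ≤ (1+n)/(1+y) - 1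
    have h3 : (1 + y) * (Real.log (1 + n) - Real.log (1 + y)) ≤ (1 + n) - (1 + y) := by
      have := mul_le_mul_of_nonneg_left hlog (le_of_lt hy1)
      calc (1 + y) * (Real.log (1 + n) - Real.log (1 + y))
          ≤ (1 + y) * ((1 + n) / (1 + y) - 1) := this
        _ = (1 + n) - (1 + y) := by field_simp
    nlinarith [h3]
  · -- last regime
    push_neg at h2
    have he : Real.exp 1 ≤ 1 + y := by
      have h4 : (1:ℝ) ≤ (1 + n) ^ 2 := by nlinarith
      have : Real.exp 1 * 1 ≤ Real.exp 1 * (1 + n) ^ 2 :=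
        mul_le_mul_of_nonneg_left h4 (le_of_lt (Real.exp_pos 1))
      unfold Cn at h2
      linarith
    have hlog1 : (1:ℝ) ≤ Real.log (1 + y) := by
      rw [Real.le_log_iff_exp_le hy1]
      exact he
    have : 1 + y ≤ (1 + y) * Real.log (1 + y) := by
      nlinarith
    unfold Cn at h2
    linarith
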